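/- Let A be a k-algebra, D, D' : A → A linear operators, and for a ∈ A write (ad a)(D) = [D, L_a] = D∘L_a − L_a∘D where L_a is left multiplication. Then for any a_1, …, a_p ∈ A (with A commutative), [⋯[[D∘D', a_1], a_2]⋯, a_p] = Σ_{I ⊆ {1,…,p}} (∏_{i∈I} ad a_i)(D) ∘ (∏_{j∉I} ad a_j)(D'). -/

import Mathlib

/-- The right adjoint action `(ad a)(D) = [D, L_a] = D ∘ L_a - L_a ∘ D`. -/
def adL (k : Type*) {A : Type*} [Field k] [CommRing A] [Algebra k A]
    (a : A) (D : A →ₗ[k] A) : A →ₗ[k] A :=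
  D ∘ₗ LinearMap.mulLeft k a - LinearMap.mulLeft k a ∘ₗ D


section
variable {k A : Type*} [Field k] [CommRing A] [Algebra k A]

lemma adL_add (x : A) (E F : A →ₗ[k] A) : adL k x (E + F) = adL k x E + adL k x F := by
  simp only [adL, LinearMap.add_comp, LinearMap.comp_add]; abel

lemma adL_comp (x : A) (E F : A →ₗ[k] A) :
    adL k x (E ∘ₗ F) = adL k x E ∘ₗ F + E ∘ₗ adL k x F := by
  ext b
  simp only [adL, LinearMap.sub_apply, LinearMap.comp_apply, LinearMap.add_apply,
    LinearMap.sub_comp, LinearMap.comp_sub, LinearMap.mulLeft_apply, LinearMap.map_sub]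
  abel

lemma adL_comm (x y : A) (E : A →ₗ[k] A) : adL k x (adL k y E) = adL k y (adL k x E) := by
  ext b
  simp only [adL, LinearMap.sub_apply, LinearMap.comp_apply, LinearMap.mulLeft_apply,
    LinearMap.map_sub, mul_left_comm, mul_sub]
  abel
end
section
variable {k A : Type*} [Field k] [CommRing A] [Algebra k A]

lemma foldr_adL_comm (l : List A) (x : A) (E : A →ₗ[k] A) :
    adL k x (l.foldr (adL k) E) = l.foldr (adL k) (adL k x E) := by
  induction l with
  | nil => rfl
  | cons y t ih => simp only [List.foldr_cons, adL_comm x y, ih]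

lemma foldl_adL_add (l : List A) (E F : A →ₗ[k] A) :
    l.foldl (fun E x => adL k x E) (E + F) =
      l.foldl (fun E x => adL k x E) E + l.foldl (fun E x => adL k x E) F := by
  induction l generalizing E F with
  | nil => rfl
  | cons y t ih => simp only [List.foldl_cons, adL_add, ih]

lemma compl_map_succ {p : ℕ} (J : Finset (Fin p)) :
    (J.map (Fin.succEmb p))ᶜ = insert 0 (Jᶜ.map (Fin.succEmb p)) := by
  ext i
  cases i using Fin.cases with
  | zero => simp [Fin.succ_ne_zero]
  | succ j => simp [Fin.succ_ne_zero, (Fin.succEmb p).injective.eq_iff,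
      Fin.succ_inj]

lemma compl_insert_zero_map_succ {p : ℕ} (J : Finset (Fin p)) :
    (insert 0 (J.map (Fin.succEmb p)))ᶜ = Jᶜ.map (Fin.succEmb p) := by
  ext i
  cases i using Fin.cases with
  | zero => simp [Fin.succ_ne_zero]
  | succ j => simp [Fin.succ_ne_zero, Fin.succ_inj]

lemma sort_map_succ {p : ℕ} (J : Finset (Fin p)) :
    (J.map (Fin.succEmb p)).sort (· ≤ ·) = (J.sort (· ≤ ·)).map Fin.succ := by
  have hperm : List.Perm ((J.map (Fin.succEmb p)).sort (· ≤ ·))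
      ((J.sort (· ≤ ·)).map Fin.succ) := by
    rw [← Multiset.coe_eq_coe]
    simp [Finset.sort_eq, Finset.map_val, ← Multiset.map_coe]
  have hs2 : List.Pairwise (· ≤ ·) ((J.sort (· ≤ ·)).map Fin.succ) :=
    List.Pairwise.map _ (fun a b h => Fin.succ_le_succ_iff.mpr h) (Finset.pairwise_sort _ _)
  exact List.Perm.eq_of_pairwise' (Finset.pairwise_sort _ _) hs2 hperm

lemma sort_insert_zero {p : ℕ} (S : Finset (Fin (p + 1))) (h : (0 : Fin (p+1)) ∉ S) :
    (insert 0 S).sort (· ≤ ·) = 0 :: S.sort (· ≤ ·) :=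
  Finset.sort_insert _ (fun b _ => Fin.zero_le b) h
end

lemma zero_not_mem_map_succ {p : ℕ} (S : Finset (Fin p)) :
    (0 : Fin (p + 1)) ∉ S.map (Fin.succEmb p) := by
  simp [Fin.succ_ne_zero, eq_comm]

lemma sum_finset_fin_succ {M : Type*} [AddCommMonoid M] {p : ℕ}
    (f : Finset (Fin (p + 1)) → M) :
    ∑ I : Finset (Fin (p + 1)), f I =
      ∑ J : Finset (Fin p),
        (f (insert 0 (J.map (Fin.succEmb p))) + f (J.map (Fin.succEmb p))) := by
  have hinj : Function.Injective
      (fun x : Finset (Fin p) × Bool =>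
        if x.2 then insert 0 (x.1.map (Fin.succEmb p)) else x.1.map (Fin.succEmb p)) := by
    rintro ⟨J, b⟩ ⟨J', b'⟩ h
    cases b <;> cases b' <;>
      simp only [Bool.false_eq_true, Bool.true_eq_false, if_true, if_false] at h
    · exact congrArg (·, false) (Finset.map_injective _ h)
    · exact absurd (h ▸ Finset.mem_insert_self 0 _) (zero_not_mem_map_succ J)
    · exact absurd (h.symm ▸ Finset.mem_insert_self 0 _) (zero_not_mem_map_succ J')
    · have : J.map (Fin.succEmb p) = J'.map (Fin.succEmb p) := by
        have := congrArg (fun S => Finset.erase S 0) h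
        simpa [Finset.erase_insert (zero_not_mem_map_succ J),
          Finset.erase_insert (zero_not_mem_map_succ J')] using this
      exact congrArg (·, true) (Finset.map_injective _ this)
  have hbij : Function.Bijective
      (fun x : Finset (Fin p) × Bool =>
        if x.2 then insert 0 (x.1.map (Fin.succEmb p)) else x.1.map (Fin.succEmb p)) := by
    rw [Fintype.bijective_iff_injective_and_card]
    refine ⟨hinj, ?_⟩
    simp [Fintype.card_finset, pow_succ, mul_comm]
  rw [← Fintype.sum_bijective _ hbij (fun x => f (if x.2 then insert 0 (x.1.map (Fin.succEmb p))
      else x.1.map (Fin.succEmb p))) f (fun _ => rfl)]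
  rw [Fintype.sum_prod_type]
  refine Finset.sum_congr rfl fun J _ => ?_
  simp [Fintype.sum_bool]

/-- for a commutative algebra `A` and operators `D, D'`,
`[⋯[[D∘D', a₁], a₂]⋯, a_p] = Σ_{I ⊆ {1,…,p}} (∏_{i∈I} ad a_i)(D) ∘ (∏_{j∉I} ad a_j)(D')`,
with products of the commuting operators `ad a_i` taken in increasing index order. -/
theorem stmt_7 {k A : Type*} [Field k] [CommRing A] [Algebra k A]
    (D D' : A →ₗ[k] A) (p : ℕ) (a : Fin p → A) :
    (List.ofFn a).foldl (fun E x => adL k x E) (D ∘ₗ D') =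
      ∑ I : Finset (Fin p),
        (((I.sort (· ≤ ·)).map a).foldr (adL k) D) ∘ₗ
          (((Iᶜ.sort (· ≤ ·)).map a).foldr (adL k) D') := by
  induction p generalizing D D' with
  | zero =>
    rw [show (Finset.univ : Finset (Finset (Fin 0))) = {∅} by decide]
    simp [Finset.sort_empty, List.ofFn_zero,
      show (∅ : Finset (Fin 0))ᶜ = ∅ from rfl]
  | succ p ih =>
    rw [List.ofFn_succ, List.foldl_cons,
      show adL k (a 0) (D ∘ₗ D') = adL k (a 0) D ∘ₗ D' + D ∘ₗ adL k (a 0) D' from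
        adL_comp _ _ _,
      foldl_adL_add, ih (adL k (a 0) D) D' (fun i => a i.succ),
      ih D (adL k (a 0) D') (fun i => a i.succ),
      sum_finset_fin_succ (fun I => (((I.sort (· ≤ ·)).map a).foldr (adL k) D) ∘ₗ
        (((Iᶜ.sort (· ≤ ·)).map a).foldr (adL k) D')),
      ← Finset.sum_add_distrib]
    refine Finset.sum_congr rfl fun J _ => ?_
    have h1 : (0 : Fin (p + 1)) ∉ J.map (Fin.succEmb p) := zero_not_mem_map_succ J
    have h2 : (0 : Fin (p + 1)) ∉ Jᶜ.map (Fin.succEmb p) := zero_not_mem_map_succ Jᶜ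
    simp only [compl_insert_zero_map_succ, compl_map_succ, sort_insert_zero _ h1,
      sort_insert_zero _ h2, sort_map_succ, List.map_cons, List.map_map,
      List.foldr_cons, ← foldr_adL_comm, Function.comp_def]
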